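/- Let S ⊆ ℝⁿ be a nonempty closed set and let μ be a positive Borel measure on ℝⁿ with supp μ = S such that μ(Q(x,1)) ≤ C''_μ for every x ∈ S. Let n < p < ∞. Then there exists a constant C depending only on n, p and C''_μ such that for every continuously differentiable function F : ℝⁿ → ℝ with F ∈ L_p(ℝⁿ) and ∫_{ℝⁿ} ‖∇F(x)‖^p dx < ∞ one has ( ∫_{ℝⁿ} |F|^p dμ )^{1/p} ≤ C ( ‖F‖_{L_p(ℝⁿ)} + ( ∫_{ℝⁿ} ‖∇F(x)‖^p dx )^{1/p} ). (The paper states this for continuous functions in W_p^1(ℝⁿ); here F is taken to be C¹ with F and ‖∇F‖ p-integrable.) -/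

import Mathlib

open MeasureTheory Metric Set
open scoped ENNReal

/-- A closed cube `Q(c, r)` in `ℝⁿ` (with the uniform norm): center `c`, radius `r`. -/
structure PCube (n : ℕ) where
  c : Fin n → ℝ
  r : ℝ

namespace PCube

variable {n : ℕ}

/-- The underlying set of the cube. -/
def toSet (Q : PCube n) : Set (Fin n → ℝ) := Metric.closedBall Q.c Q.r

/-- The diameter `2r` of the cube (uniform norm). -/
def diam (Q : PCube n) : ℝ := 2 * Q.r

/-- Dilation `λQ` of the cube about its center. -/
def scale (Q : PCube n) (l : ℝ) : PCube n := ⟨Q.c, l * Q.r⟩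

/-- The volume `|Q| = (2r)ⁿ` of the cube. -/
def vol (Q : PCube n) : ℝ := (2 * Q.r) ^ n

end PCube

/-- Distance between two subsets of `ℝⁿ`. -/
noncomputable def setDist {n : ℕ} (A B : Set (Fin n → ℝ)) : ℝ :=
  sInf (Set.image2 dist A B)

/-- Oscillation `E(f; U)` of `f` on `U`. -/
noncomputable def osc {n : ℕ} (f : (Fin n → ℝ) → ℝ) (U : Set (Fin n → ℝ)) : ℝ :=
  sSup ((fun q : (Fin n → ℝ) × (Fin n → ℝ) => |f q.1 - f q.2|) '' (U ×ˢ U))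

/-- `Q` is `α`-porous with respect to `S`. -/
def Porous {n : ℕ} (α : ℝ) (S : Set (Fin n → ℝ)) (Q : PCube n) : Prop :=
  ∃ Q' : PCube n, 0 < Q'.r ∧ Q'.toSet ⊆ Q.toSet \ S ∧ α * Q.diam ≤ Q'.diam

/-- `‖∇F(x)‖ = max_i |∂F/∂x_i(x)|`. -/
noncomputable def gradNorm {n : ℕ} (F : (Fin n → ℝ) → ℝ) (x : Fin n → ℝ) : ℝ :=
  ‖fun i : Fin n => fderiv ℝ F x (Pi.single i 1)‖

/-- A packing: a finite family of nondegenerate, pairwise disjoint cubes. -/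
def IsPacking {n : ℕ} (π : Finset (PCube n)) : Prop :=
  (∀ Q ∈ π, 0 < Q.r) ∧ ∀ Q ∈ π, ∀ Q' ∈ π, Q ≠ Q' → Disjoint Q.toSet Q'.toSet

/-- All cubes in the family have equal diameter. -/
def EqualDiam {n : ℕ} (π : Finset (PCube n)) : Prop :=
  ∀ Q ∈ π, ∀ Q' ∈ π, Q.r = Q'.r

/-- The functional `A_p(f; t : S)` (via local oscillations). -/
noncomputable def Ap {n : ℕ} (p : ℝ) (f : (Fin n → ℝ) → ℝ) (t : ℝ)
    (S : Set (Fin n → ℝ)) : ℝ≥0∞ :=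
  ⨆ π ∈ {π : Finset (PCube n) | IsPacking π ∧ EqualDiam π ∧ (∀ Q ∈ π, Q.c ∈ S) ∧
      ∀ Q ∈ π, Q.diam ≤ t},
    ENNReal.ofReal ((∑ Q ∈ π, Q.vol * osc f (Q.toSet ∩ S) ^ p) ^ (1 / p))

/-- `𝔸_{p,α}(f; t : S)`: as `A_p` but over `α`-porous packings. -/
noncomputable def ApPorous {n : ℕ} (p α : ℝ) (f : (Fin n → ℝ) → ℝ) (t : ℝ)
    (S : Set (Fin n → ℝ)) : ℝ≥0∞ :=
  ⨆ π ∈ {π : Finset (PCube n) | IsPacking π ∧ EqualDiam π ∧ (∀ Q ∈ π, Q.c ∈ S) ∧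
      (∀ Q ∈ π, Q.diam ≤ t) ∧ ∀ Q ∈ π, Porous α S Q},
    ENNReal.ofReal ((∑ Q ∈ π, Q.vol * osc f (Q.toSet ∩ S) ^ p) ^ (1 / p))

/-- `E(f; Q)_{L_p(μ)}`. -/
noncomputable def oscLp {n : ℕ} (μ : Measure (Fin n → ℝ)) (p : ℝ) (f : (Fin n → ℝ) → ℝ)
    (Q : PCube n) : ℝ≥0∞ :=
  ((μ Q.toSet)⁻¹ ^ 2 *
    ∫⁻ x in Q.toSet, ∫⁻ y in Q.toSet, ENNReal.ofReal (|f x - f y| ^ p) ∂μ ∂μ) ^ (1 / p)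

/-- `A_p(f; t : S)_{L_p(μ)}`. -/
noncomputable def ApLp {n : ℕ} (μ : Measure (Fin n → ℝ)) (p : ℝ) (f : (Fin n → ℝ) → ℝ)
    (t : ℝ) (S : Set (Fin n → ℝ)) : ℝ≥0∞ :=
  ⨆ π ∈ {π : Finset (PCube n) | IsPacking π ∧ EqualDiam π ∧ (∀ Q ∈ π, Q.c ∈ S) ∧
      ∀ Q ∈ π, Q.diam ≤ t},
    (∑ Q ∈ π, ENNReal.ofReal Q.vol * oscLp μ p f Q ^ p) ^ (1 / p)

/-- `𝒜_{p,α}(f; t : S)_{L_p(μ)}`: over `α`-porous packings centered at the boundary of `S`. -/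
noncomputable def AcalLp {n : ℕ} (μ : Measure (Fin n → ℝ)) (p α : ℝ) (f : (Fin n → ℝ) → ℝ)
    (t : ℝ) (S : Set (Fin n → ℝ)) : ℝ≥0∞ :=
  ⨆ π ∈ {π : Finset (PCube n) | IsPacking π ∧ EqualDiam π ∧ (∀ Q ∈ π, Q.c ∈ frontier S) ∧
      (∀ Q ∈ π, Q.diam ≤ t) ∧ ∀ Q ∈ π, Porous α S Q},
    (∑ Q ∈ π, ENNReal.ofReal Q.vol * oscLp μ p f Q ^ p) ^ (1 / p)

/-- `ρ_{α,S}(x,y) ∈ [0,∞]`. -/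
noncomputable def rho {n : ℕ} (α : ℝ) (S : Set (Fin n → ℝ)) (x y : Fin n → ℝ) : ℝ≥0∞ :=
  sInf {d : ℝ≥0∞ | ∃ Q : PCube n, 0 < Q.r ∧ x ∈ Q.toSet ∧ y ∈ Q.toSet ∧
    (Q.scale α).toSet ⊆ Sᶜ ∧ d = ENNReal.ofReal Q.diam}

/-- The sharp maximal function `f^♯_{∞,S}`. -/
noncomputable def sharpMax {n : ℕ} (S : Set (Fin n → ℝ)) (f : (Fin n → ℝ) → ℝ)
    (x : Fin n → ℝ) : ℝ :=
  sSup {v : ℝ | ∃ r : ℝ, 0 < r ∧ ∃ y ∈ Metric.closedBall x r ∩ S,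
    ∃ z ∈ Metric.closedBall x r ∩ S, v = |f y - f z| / r}

/-- `supp μ = S`. -/
def IsSuppOn {n : ℕ} (μ : Measure (Fin n → ℝ)) (S : Set (Fin n → ℝ)) : Prop :=
  μ Sᶜ = 0 ∧ ∀ x ∈ S, ∀ r : ℝ, 0 < r → 0 < μ (Metric.closedBall x r)

/-- The doubling condition (1.12). -/
def Doubling {n : ℕ} (μ : Measure (Fin n → ℝ)) (S : Set (Fin n → ℝ)) (cμ : ℝ) : Prop :=
  ∀ x ∈ S, ∀ r : ℝ, 0 < r → r ≤ 1 / 2 →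
    μ (Metric.closedBall x (2 * r)) ≤ ENNReal.ofReal cμ * μ (Metric.closedBall x r)

/-- Condition `(D_n)` (1.11). -/
def CondDn {n : ℕ} (μ : Measure (Fin n → ℝ)) (S : Set (Fin n → ℝ)) (Cμ : ℝ) : Prop :=
  ∀ x ∈ S, ∀ r : ℝ, 0 < r → r ≤ 1 → ∀ k : ℝ, 1 ≤ k → k ≤ 1 / r →
    μ (Metric.closedBall x (k * r)) ≤ ENNReal.ofReal (Cμ * k ^ n) * μ (Metric.closedBall x r)

/-- The normalization condition (1.13). -/
def Normalized {n : ℕ} (μ : Measure (Fin n → ℝ)) (S : Set (Fin n → ℝ)) (C' C'' : ℝ) : Prop :=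
  ∀ x ∈ S, ENNReal.ofReal C' ≤ μ (Metric.closedBall x 1) ∧
    μ (Metric.closedBall x 1) ≤ ENNReal.ofReal C''

/-- The double integral over `{‖x−y‖ < t}` (before taking the `1/p` power). -/
noncomputable def I1 {n : ℕ} (μ : Measure (Fin n → ℝ)) (p : ℝ) (S : Set (Fin n → ℝ))
    (f : (Fin n → ℝ) → ℝ) (t : ℝ) : ℝ≥0∞ :=
  ∫⁻ x in S, ∫⁻ y in S,
    ({y : Fin n → ℝ | dist x y < t}.indicator
      (fun y => ENNReal.ofReal (|f x - f y| ^ p) * ENNReal.ofReal (t ^ ((n : ℝ) - p)) *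
        ((μ (Metric.closedBall x t))⁻¹) ^ 2)) y ∂μ ∂μ

/-- The double integral over `{ρ_{α,S}(x,y) < δ}` (before taking the `1/p` power). -/
noncomputable def I2 {n : ℕ} (μ : Measure (Fin n → ℝ)) (p α : ℝ) (S : Set (Fin n → ℝ))
    (f : (Fin n → ℝ) → ℝ) (δ : ℝ) : ℝ≥0∞ :=
  ∫⁻ x in S, ∫⁻ y in S,
    ({y : Fin n → ℝ | rho α S x y < ENNReal.ofReal δ}.indicator
      (fun y => ENNReal.ofReal (|f x - f y| ^ p) * rho α S x y ^ ((n : ℝ) - p) *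
        ((μ (Metric.closedBall x (rho α S x y).toReal))⁻¹) ^ 2)) y ∂μ ∂μ

lemma gradNorm_nonneg {n : ℕ} (F : (Fin n → ℝ) → ℝ) (x) : 0 ≤ gradNorm F x := norm_nonneg _

lemma gradNorm_continuous {n : ℕ} {F : (Fin n → ℝ) → ℝ} (hF : ContDiff ℝ 1 F) :
    Continuous (gradNorm F) := by
  have h := hF.continuous_fderiv one_ne_zero
  exact (continuous_pi fun i => (h.clm_apply continuous_const)).norm

lemma apply_le_gradNorm {n : ℕ} (F : (Fin n → ℝ) → ℝ) (z v : Fin n → ℝ) (hv : ‖v‖ ≤ 1) :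
    |fderiv ℝ F z v| ≤ (n : ℝ) * gradNorm F z := by
  set L := fderiv ℝ F z with hL
  have hv' : v = ∑ i, v i • (Pi.single i (1:ℝ) : Fin n → ℝ) := by
    ext j
    simp [Finset.sum_apply, Pi.single_apply]
  have hLv : L v = ∑ i, v i * L (Pi.single i 1) := by
    conv_lhs => rw [hv']
    rw [map_sum]
    exact Finset.sum_congr rfl fun i _ => by rw [_root_.map_smul]; rfl
  calc |L v| = |∑ i, v i * L (Pi.single i 1)| := by rw [hLv]
    _ ≤ ∑ i, |v i * L (Pi.single i 1)| := Finset.abs_sum_le_sum_abs _ _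
    _ ≤ ∑ _i : Fin n, 1 * gradNorm F z := by
        apply Finset.sum_le_sum
        intro i _
        rw [abs_mul]
        apply mul_le_mul
        · exact le_trans (norm_le_pi_norm v i) hv
        · exact norm_le_pi_norm (fun i => L (Pi.single i 1)) i
        · exact abs_nonneg _
        · exact zero_le_one
    _ = (n : ℝ) * gradNorm F z := by simp [Finset.sum_const]

lemma ftc_bound {n : ℕ} {F : (Fin n → ℝ) → ℝ} (hF : ContDiff ℝ 1 F) (x y : Fin n → ℝ)
    (hy : y ∈ Metric.closedBall x 1) :
    |F x| ≤ |F y| + ∫ t in (0:ℝ)..1, (n : ℝ) * gradNorm F (x + t • (y - x)) := by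
  set u : ℝ → (Fin n → ℝ) := fun t => x + t • (y - x) with hu
  have hucont : Continuous u := by continuity
  have hud : ∀ t : ℝ, HasDerivAt u (y - x) t := by
    intro t
    simpa [hu] using ((hasDerivAt_id t).smul_const (y - x)).const_add x
  set φ' : ℝ → ℝ := fun t => fderiv ℝ F (u t) (y - x) with hφ'
  have hφd : ∀ t : ℝ, HasDerivAt (F ∘ u) (φ' t) t := fun t =>
    ((hF.differentiable one_ne_zero (u t)).hasFDerivAt).comp_hasDerivAt t (hud t)
  have hφ'c : Continuous φ' :=
    ((hF.continuous_fderiv one_ne_zero).comp hucont).clm_apply continuous_const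
  have key : F y - F x = ∫ t in (0:ℝ)..1, φ' t := by
    have := intervalIntegral.integral_eq_sub_of_hasDerivAt
      (fun t _ => hφd t) (hφ'c.intervalIntegrable 0 1)
    rw [this]
    simp [hu, Function.comp]
  have h1 : |F x| ≤ |F y| + |∫ t in (0:ℝ)..1, φ' t| := by
    rw [← key]
    have h2 : F x = F y - (F y - F x) := by ring
    conv_lhs => rw [h2]
    exact abs_sub (F y) (F y - F x)
  refine h1.trans (add_le_add_right ?_ _)
  have h3 : |∫ t in (0:ℝ)..1, φ' t| ≤ ∫ t in (0:ℝ)..1, |φ' t| :=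
    intervalIntegral.abs_integral_le_integral_abs zero_le_one
  refine h3.trans ?_
  apply intervalIntegral.integral_mono_on zero_le_one
    (hφ'c.abs.intervalIntegrable 0 1)
    ((continuous_const.mul ((gradNorm_continuous hF).comp hucont)).intervalIntegrable 0 1)
  intro t _
  exact apply_le_gradNorm F (u t) (y - x) (by rw [← dist_eq_norm]; exact Metric.mem_closedBall.mp hy)

lemma holder_one {α : Type*} [MeasurableSpace α] (ν : Measure α) {p : ℝ} (hp : 1 < p)
    {W : α → ℝ≥0∞} (hW : AEMeasurable W ν) :
    ∫⁻ a, W a ∂ν ≤ (∫⁻ a, W a ^ p ∂ν) ^ (1 / p) * (ν Set.univ) ^ (1 - 1 / p) := by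
  have hpq := Real.HolderConjugate.conjExponent hp
  have := ENNReal.lintegral_mul_le_Lp_mul_Lq ν hpq hW (aemeasurable_const (b := (1:ℝ≥0∞)))
  simp only [Pi.mul_apply, mul_one, ENNReal.one_rpow, lintegral_const, one_mul] at this
  have hq : (1:ℝ) / p.conjExponent = 1 - 1 / p := by
    rw [one_div, ← hpq.one_sub_inv, one_div]
  rwa [hq] at this

lemma lintegral_comp_affine {n : ℕ} {W : (Fin n → ℝ) → ℝ≥0∞} (hW : Measurable W)
    (x : Fin n → ℝ) {t : ℝ} (ht : 0 < t) :
    ∫⁻ y in Metric.closedBall x 1, W (x + t • (y - x))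
      = (ENNReal.ofReal (t ^ n))⁻¹ * ∫⁻ z in Metric.closedBall x t, W z := by
  set c : Fin n → ℝ := x - t • x with hc
  set φ : (Fin n → ℝ) → (Fin n → ℝ) := fun y => t • y + c with hφ
  have hφc : Continuous φ := by continuity
  have hφeq : ∀ y, x + t • (y - x) = φ y := by
    intro y; simp [hφ, hc, smul_sub]; abel
  have hmap : Measure.map φ volume
      = ENNReal.ofReal |(t ^ n)⁻¹| • (volume : Measure (Fin n → ℝ)) := by
    have h1 : φ = (fun z => z + c) ∘ (fun y => t • y) := rfl
    rw [h1, ← Measure.map_map (measurable_id'.add_const c) (measurable_const_smul t),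
      Measure.map_addHaar_smul volume (ne_of_gt ht), Measure.map_smul,
      map_add_right_eq_self volume c, Module.finrank_fin_fun]
  have hmem : ∀ y, φ y ∈ Metric.closedBall x t ↔ y ∈ Metric.closedBall x 1 := by
    intro y
    simp only [Metric.mem_closedBall]
    rw [dist_eq_norm, dist_eq_norm]
    have : φ y - x = t • (y - x) := by simp [hφ, hc, smul_sub]; abel
    rw [this, norm_smul, Real.norm_eq_abs, abs_of_pos ht]
    constructor
    · intro h; nlinarith [norm_nonneg (y - x)]
    · intro h; nlinarith [norm_nonneg (y - x)]
  have hind : ∀ y, (Metric.closedBall x 1).indicator (fun y => W (φ y)) y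
      = ((Metric.closedBall x t).indicator W) (φ y) := by
    intro y
    by_cases hy : y ∈ Metric.closedBall x 1
    · rw [Set.indicator_of_mem hy, Set.indicator_of_mem ((hmem y).mpr hy)]
    · rw [Set.indicator_of_notMem hy,
        Set.indicator_of_notMem (fun h => hy ((hmem y).mp h))]
  have hWind : Measurable ((Metric.closedBall x t).indicator W) :=
    hW.indicator measurableSet_closedBall
  calc ∫⁻ y in Metric.closedBall x 1, W (x + t • (y - x))
      = ∫⁻ y, (Metric.closedBall x 1).indicator (fun y => W (φ y)) y := by
        rw [lintegral_indicator measurableSet_closedBall]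
        exact lintegral_congr fun y => by rw [hφeq y]
    _ = ∫⁻ y, ((Metric.closedBall x t).indicator W) (φ y) :=
        lintegral_congr hind
    _ = ∫⁻ z, ((Metric.closedBall x t).indicator W) z ∂(Measure.map φ volume) :=
        (lintegral_map hWind hφc.measurable).symm
    _ = (ENNReal.ofReal (t ^ n))⁻¹ * ∫⁻ z in Metric.closedBall x t, W z := by
        rw [hmap, lintegral_smul_measure, lintegral_indicator measurableSet_closedBall,
          abs_of_pos (by positivity), ENNReal.ofReal_inv_of_pos (by positivity), smul_eq_mul]

lemma two_rpow_helper {s : ℝ} (hs : 0 ≤ s) (a b : ℝ≥0∞) :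
    (a + b) ^ s ≤ 2 ^ s * (a ^ s + b ^ s) := by
  calc (a + b) ^ s ≤ (2 * max a b) ^ s := by
        apply ENNReal.rpow_le_rpow _ hs
        rw [two_mul]
        exact add_le_add (le_max_left a b) (le_max_right a b)
    _ = 2 ^ s * (max a b) ^ s := ENNReal.mul_rpow_of_nonneg _ _ hs
    _ ≤ 2 ^ s * (a ^ s + b ^ s) := by
        apply mul_le_mul_right
        rcases le_total a b with h | h
        · rw [max_eq_right h]; exact le_add_self
        · rw [max_eq_left h]; exact self_le_add_right _ _

lemma morrey {n : ℕ} {p : ℝ} (hn : 0 < n) (hp : (n : ℝ) < p) :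
    ∃ K : ℝ≥0∞, K ≠ ∞ ∧ ∀ F : (Fin n → ℝ) → ℝ, ContDiff ℝ 1 F → ∀ x : Fin n → ℝ,
      ENNReal.ofReal (|F x| ^ p)
        ≤ K * ∫⁻ y in Metric.closedBall x 1,
            (ENNReal.ofReal (|F y| ^ p) + ENNReal.ofReal (gradNorm F y ^ p)) := by
  have hn1 : (1 : ℝ) ≤ n := by exact_mod_cast hn
  have hp1 : 1 < p := lt_of_le_of_lt hn1 hp
  have hp0 : 0 < p := lt_trans zero_lt_one hp1
  have hexp : (0:ℝ) ≤ 1 - 1 / p := by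
    rw [sub_nonneg]
    rw [div_le_one hp0]; exact hp1.le
  set v0 : ℝ≥0∞ := volume (Metric.closedBall (0 : Fin n → ℝ) 1) with hv0
  have v0pos : v0 ≠ 0 := (measure_closedBall_pos volume 0 one_pos).ne'
  have v0top : v0 ≠ ∞ := measure_closedBall_lt_top.ne
  have hr : (-1 : ℝ) < -(n : ℝ) / p := by
    rw [neg_div, neg_lt_neg_iff]
    exact (div_lt_one hp0).mpr hp
  have hint : IntegrableOn (fun t : ℝ => t ^ (-(n:ℝ)/p)) (Ioc (0:ℝ) 1) := by
    have h := intervalIntegral.intervalIntegrable_rpow' (a := (0:ℝ)) (b := 1) hr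
    rwa [intervalIntegrable_iff, uIoc_of_le zero_le_one] at h
  set c1 : ℝ≥0∞ := ∫⁻ t in Ioc (0:ℝ) 1, ENNReal.ofReal (t ^ (-(n:ℝ)/p)) with hc1
  have c1eq : c1 = ENNReal.ofReal (∫ t in Ioc (0:ℝ) 1, t ^ (-(n:ℝ)/p)) := by
    rw [hc1, ← ofReal_integral_eq_lintegral_ofReal hint]
    exact (ae_restrict_iff' measurableSet_Ioc).mpr
      (ae_of_all _ fun t ht => Real.rpow_nonneg ht.1.le _)
  have c1top : c1 ≠ ∞ := by rw [c1eq]; exact ENNReal.ofReal_ne_top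
  set cmax : ℝ≥0∞ := v0 ^ (1 - 1/p) * (1 + ENNReal.ofReal n * c1) with hcmax
  set K0 : ℝ≥0∞ := v0⁻¹ * cmax with hK0
  refine ⟨K0 ^ p * 2 ^ p, ?_, ?_⟩
  · apply ENNReal.mul_ne_top _ (ENNReal.rpow_ne_top_of_nonneg hp0.le (by norm_num))
    apply ENNReal.rpow_ne_top_of_nonneg hp0.le
    apply ENNReal.mul_ne_top (ENNReal.inv_ne_top.mpr v0pos)
    apply ENNReal.mul_ne_top (ENNReal.rpow_ne_top_of_nonneg hexp v0top)
    exact ENNReal.add_ne_top.mpr ⟨ENNReal.one_ne_top,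
      ENNReal.mul_ne_top ENNReal.ofReal_ne_top c1top⟩
  intro F hF x
  set Gr := gradNorm F with hGrdef
  have hGrc : Continuous Gr := gradNorm_continuous hF
  have hFc : Continuous F := hF.continuous
  set f : (Fin n → ℝ) → ℝ≥0∞ := fun y => ENNReal.ofReal (|F y| ^ p) with hfdef
  set g : (Fin n → ℝ) → ℝ≥0∞ := fun y => ENNReal.ofReal (Gr y ^ p) with hgdef
  have hfm : Measurable f :=
    (ENNReal.continuous_ofReal.comp (hFc.abs.rpow_const fun y => Or.inr hp0.le)).measurable
  have hgm : Measurable g :=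
    (ENNReal.continuous_ofReal.comp (hGrc.rpow_const fun y => Or.inr hp0.le)).measurable
  set B := Metric.closedBall x 1 with hBdef
  set A1 : ℝ≥0∞ := ∫⁻ y in B, f y with hA1def
  set A2 : ℝ≥0∞ := ∫⁻ y in B, g y with hA2def
  set G : (Fin n → ℝ) → ℝ → ℝ≥0∞ := fun y t => ENNReal.ofReal (Gr (x + t • (y - x))) with hGdef
  have hGjoint : Continuous (Function.uncurry G) := by
    apply ENNReal.continuous_ofReal.comp
    exact hGrc.comp
      (continuous_const.add (continuous_snd.smul (continuous_fst.sub continuous_const)))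
  have hGm : Measurable (Function.uncurry G) := hGjoint.measurable
  set J : (Fin n → ℝ) → ℝ≥0∞ := fun y => ∫⁻ t in Ioc (0:ℝ) 1, G y t with hJdef
  have hJm : Measurable J := Measurable.lintegral_prod_right hGm
  have hGrnn : ∀ z, 0 ≤ Gr z := fun z => gradNorm_nonneg F z
  have hgm' : Measurable fun z => ENNReal.ofReal (Gr z) :=
    (ENNReal.continuous_ofReal.comp hGrc).measurable
  have hFam : Measurable fun y => ENNReal.ofReal |F y| :=
    (ENNReal.continuous_ofReal.comp hFc.abs).measurable
  have hvolB : volume B = v0 := Measure.addHaar_closedBall_center volume x 1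
  -- Step A : pointwise FTC bound
  have stepA : ∀ y ∈ B, ENNReal.ofReal |F x|
      ≤ ENNReal.ofReal |F y| + ENNReal.ofReal (n:ℝ) * J y := by
    intro y hy
    have h2 : ENNReal.ofReal |F x| ≤ ENNReal.ofReal
        (|F y| + ∫ t in (0:ℝ)..1, (n:ℝ) * Gr (x + t • (y - x))) :=
      ENNReal.ofReal_le_ofReal (ftc_bound hF x y hy)
    refine h2.trans (le_of_eq ?_)
    have hcont : Continuous fun t : ℝ => (n:ℝ) * Gr (x + t • (y - x)) :=
      continuous_const.mul
        (hGrc.comp (continuous_const.add (continuous_id.smul continuous_const)))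
    have hintnn : 0 ≤ ∫ t in (0:ℝ)..1, (n:ℝ) * Gr (x + t • (y - x)) := by
      apply intervalIntegral.integral_nonneg zero_le_one
      intro t _
      exact mul_nonneg (Nat.cast_nonneg n) (hGrnn _)
    rw [ENNReal.ofReal_add (abs_nonneg _) hintnn]
    congr 1
    rw [intervalIntegral.integral_of_le zero_le_one,
      ofReal_integral_eq_lintegral_ofReal (hcont.integrableOn_Ioc)
        (ae_of_all _ fun t => mul_nonneg (Nat.cast_nonneg n) (hGrnn _))]
    have : ∀ t : ℝ, ENNReal.ofReal ((n:ℝ) * Gr (x + t • (y - x)))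
        = ENNReal.ofReal (n:ℝ) * G y t := fun t =>
      ENNReal.ofReal_mul (Nat.cast_nonneg n)
    simp_rw [this]
    have hGym : Measurable (G y) := (hGjoint.comp (Continuous.prodMk_right y)).measurable
    rw [lintegral_const_mul _ hGym]
  -- Step B : averaging over the ball
  have stepB : ENNReal.ofReal |F x| * v0
      ≤ (∫⁻ y in B, ENNReal.ofReal |F y|) + ENNReal.ofReal (n:ℝ) * ∫⁻ y in B, J y := by
    calc ENNReal.ofReal |F x| * v0 = ∫⁻ _ in B, ENNReal.ofReal |F x| := by
          rw [setLIntegral_const, hvolB]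
      _ ≤ ∫⁻ y in B, (ENNReal.ofReal |F y| + ENNReal.ofReal (n:ℝ) * J y) :=
          setLIntegral_mono (hFam.add (measurable_const.mul hJm)) stepA
      _ = _ := by
          rw [lintegral_add_left hFam, lintegral_const_mul _ hJm]
  -- Step C : Hölder for the F-term
  have stepC : (∫⁻ y in B, ENNReal.ofReal |F y|) ≤ A1 ^ (1/p) * v0 ^ (1 - 1/p) := by
    have h := holder_one (volume.restrict B) hp1
      (W := fun y => ENNReal.ofReal |F y|)
      hFam.aemeasurable
    rw [Measure.restrict_apply_univ, hvolB] at h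
    refine h.trans (le_of_eq ?_)
    congr 1
    rw [hA1def]
    congr 1
    exact lintegral_congr fun y => ENNReal.ofReal_rpow_of_nonneg (abs_nonneg _) hp0.le
  -- Step D1 : inner estimate at fixed t
  have stepD1 : ∀ t ∈ Ioc (0:ℝ) 1, (∫⁻ y in B, G y t)
      ≤ ENNReal.ofReal (t ^ (-(n:ℝ)/p)) * (v0 ^ (1 - 1/p) * A2 ^ (1/p)) := by
    intro t ht
    set τ := ENNReal.ofReal (t ^ n) with hτdef
    have hτ0 : τ ≠ 0 := (ENNReal.ofReal_pos.mpr (pow_pos ht.1 n)).ne'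
    have hhold := holder_one (volume.restrict (Metric.closedBall x t)) hp1 hgm'.aemeasurable
    rw [Measure.restrict_apply_univ] at hhold
    have hA2t : (∫⁻ z in Metric.closedBall x t, (ENNReal.ofReal (Gr z)) ^ p) ≤ A2 := by
      refine le_trans (le_of_eq ?_)
        (lintegral_mono_set (Metric.closedBall_subset_closedBall ht.2))
      exact lintegral_congr fun z => ENNReal.ofReal_rpow_of_nonneg (hGrnn z) hp0.le
    have hvol : volume (Metric.closedBall x t) ≤ τ * v0 := by
      rw [Measure.addHaar_closedBall volume x ht.1.le, Module.finrank_fin_fun, hτdef]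
      exact mul_le_mul_right (measure_mono Metric.ball_subset_closedBall) _
    calc (∫⁻ y in B, G y t)
        = τ⁻¹ * ∫⁻ z in Metric.closedBall x t, ENNReal.ofReal (Gr z) :=
          lintegral_comp_affine hgm' x ht.1
      _ ≤ τ⁻¹ * ((∫⁻ z in Metric.closedBall x t, (ENNReal.ofReal (Gr z)) ^ p) ^ (1/p)
            * (τ * v0) ^ (1 - 1/p)) :=
          mul_le_mul_right (hhold.trans
            (mul_le_mul' le_rfl (ENNReal.rpow_le_rpow hvol hexp))) _
      _ ≤ τ⁻¹ * (A2 ^ (1/p) * (τ * v0) ^ (1 - 1/p)) :=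
          mul_le_mul_right
            (mul_le_mul' (ENNReal.rpow_le_rpow hA2t (by positivity)) le_rfl) _
      _ = (τ⁻¹ * τ ^ (1 - 1/p)) * (v0 ^ (1 - 1/p) * A2 ^ (1/p)) := by
          rw [ENNReal.mul_rpow_of_nonneg _ _ hexp]; ring
      _ = ENNReal.ofReal (t ^ (-(n:ℝ)/p)) * (v0 ^ (1 - 1/p) * A2 ^ (1/p)) := by
          congr 1
          rw [← ENNReal.rpow_neg_one τ, ← ENNReal.rpow_add _ _ hτ0 ENNReal.ofReal_ne_top]
          have he : (-1 : ℝ) + (1 - 1/p) = -(1/p) := by ring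
          rw [he, hτdef, ENNReal.ofReal_rpow_of_pos (pow_pos ht.1 n)]
          congr 1
          rw [← Real.rpow_natCast t n, ← Real.rpow_mul ht.1.le]
          congr 1
          field_simp
  -- Step D : the gradient term
  have stepD : (∫⁻ y in B, J y) ≤ c1 * (v0 ^ (1 - 1/p) * A2 ^ (1/p)) := by
    have hswap : (∫⁻ y in B, J y) = ∫⁻ t in Ioc (0:ℝ) 1, ∫⁻ y in B, G y t :=
      lintegral_lintegral_swap hGm.aemeasurable
    rw [hswap]
    have hmr : Measurable fun t : ℝ => ENNReal.ofReal (t ^ (-(n:ℝ)/p)) :=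
      (measurable_id.pow_const _).ennreal_ofReal
    calc ∫⁻ t in Ioc (0:ℝ) 1, ∫⁻ y in B, G y t
        ≤ ∫⁻ t in Ioc (0:ℝ) 1,
            ENNReal.ofReal (t ^ (-(n:ℝ)/p)) * (v0 ^ (1 - 1/p) * A2 ^ (1/p)) :=
          setLIntegral_mono (hmr.mul_const _) stepD1
      _ = c1 * (v0 ^ (1 - 1/p) * A2 ^ (1/p)) := lintegral_mul_const _ hmr
  -- Step E : combine and divide by v0
  have stepE : ENNReal.ofReal |F x| ≤ K0 * (A1 ^ (1/p) + A2 ^ (1/p)) := by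
    have hE : ENNReal.ofReal |F x| * v0 ≤ cmax * (A1 ^ (1/p) + A2 ^ (1/p)) := by
      refine stepB.trans ?_
      have h1 : (∫⁻ y in B, ENNReal.ofReal |F y|) ≤ cmax * A1 ^ (1/p) := by
        refine stepC.trans ?_
        rw [mul_comm, hcmax]
        exact mul_le_mul_left (le_mul_of_one_le_right' le_self_add) _
      have h2 : ENNReal.ofReal (n:ℝ) * (∫⁻ y in B, J y) ≤ cmax * A2 ^ (1/p) := by
        refine (mul_le_mul_right stepD _).trans ?_
        have : ENNReal.ofReal (n:ℝ) * (c1 * (v0 ^ (1 - 1/p) * A2 ^ (1/p)))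
            = (v0 ^ (1 - 1/p) * (ENNReal.ofReal (n:ℝ) * c1)) * A2 ^ (1/p) := by ring
        rw [this, hcmax]
        exact mul_le_mul_left (mul_le_mul_right le_add_self _) _
      calc (∫⁻ y in B, ENNReal.ofReal |F y|) + ENNReal.ofReal (n:ℝ) * ∫⁻ y in B, J y
          ≤ cmax * A1 ^ (1/p) + cmax * A2 ^ (1/p) := add_le_add h1 h2
        _ = cmax * (A1 ^ (1/p) + A2 ^ (1/p)) := (mul_add _ _ _).symm
    have h := (ENNReal.le_div_iff_mul_le (Or.inl v0pos) (Or.inl v0top)).mpr hE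
    refine h.trans (le_of_eq ?_)
    rw [ENNReal.div_eq_inv_mul, hK0]
    ring
  -- conclusion
  have hpow : ∀ A : ℝ≥0∞, (A ^ (1/p)) ^ p = A := fun A => by
    rw [← ENNReal.rpow_mul, one_div, inv_mul_cancel₀ hp0.ne', ENNReal.rpow_one]
  calc ENNReal.ofReal (|F x| ^ p) = (ENNReal.ofReal |F x|) ^ p :=
        (ENNReal.ofReal_rpow_of_nonneg (abs_nonneg _) hp0.le).symm
    _ ≤ (K0 * (A1 ^ (1/p) + A2 ^ (1/p))) ^ p := ENNReal.rpow_le_rpow stepE hp0.le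
    _ = K0 ^ p * (A1 ^ (1/p) + A2 ^ (1/p)) ^ p := ENNReal.mul_rpow_of_nonneg _ _ hp0.le
    _ ≤ K0 ^ p * (2 ^ p * ((A1 ^ (1/p)) ^ p + (A2 ^ (1/p)) ^ p)) :=
        mul_le_mul_right (two_rpow_helper hp0.le _ _) _
    _ = (K0 ^ p * 2 ^ p) * (A1 + A2) := by rw [hpow, hpow, mul_assoc]
    _ = (K0 ^ p * 2 ^ p) * ∫⁻ y in B, (f y + g y) := by
        rw [lintegral_add_left hfm]

def cell {n : ℕ} (k : Fin n → ℤ) : Set (Fin n → ℝ) := {x | ∀ i, Int.floor (x i) = k i}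

def shifts (n : ℕ) : Finset (Fin n → ℤ) :=
  Fintype.piFinset fun _ => ({-1, 0, 1} : Finset ℤ)

lemma cell_measurable {n : ℕ} (k : Fin n → ℤ) : MeasurableSet (cell k) := by
  have : cell k = ⋂ i, (fun x : Fin n → ℝ => x i) ⁻¹' (Ico (k i : ℝ) (k i + 1)) := by
    ext x
    simp only [cell, mem_setOf_eq, mem_iInter, mem_preimage, mem_Ico]
    exact forall_congr' fun i => Int.floor_eq_iff
  rw [this]
  exact MeasurableSet.iInter fun i => (measurableSet_Ico).preimage (measurable_pi_apply i)

lemma cell_disjoint {n : ℕ} : Pairwise (Function.onFun Disjoint (cell (n := n))) := by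
  intro k k' hkk'
  rw [Function.onFun, Set.disjoint_left]
  rintro x hx hx'
  exact hkk' (funext fun i => (hx i).symm.trans (hx' i))

lemma cell_cover {n : ℕ} : ⋃ k : Fin n → ℤ, cell k = univ := by
  ext x
  simp only [mem_iUnion, mem_univ, iff_true]
  exact ⟨fun i => Int.floor (x i), fun i => rfl⟩

lemma cell_diam {n : ℕ} {k : Fin n → ℤ} {x z : Fin n → ℝ} (hx : x ∈ cell k) (hz : z ∈ cell k) :
    dist x z ≤ 1 := by
  rw [dist_pi_le_iff zero_le_one]
  intro i
  have h1 := Int.floor_eq_iff.mp (hx i)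
  have h2 := Int.floor_eq_iff.mp (hz i)
  rw [Real.dist_eq, abs_le]
  constructor <;> linarith [h1.1, h1.2, h2.1, h2.2]

lemma ball_subset_cells {n : ℕ} {k : Fin n → ℤ} {x : Fin n → ℝ} (hx : x ∈ cell k) :
    Metric.closedBall x 1 ⊆ ⋃ d ∈ shifts n, cell (k + d) := by
  intro y hy
  have hyd : ∀ i, |y i - x i| ≤ 1 := by
    intro i
    have := dist_le_pi_dist y x i
    rw [Real.dist_eq] at this
    exact this.trans (Metric.mem_closedBall.mp hy)
  set d : Fin n → ℤ := fun i => Int.floor (y i) - k i with hd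
  have hbound : ∀ i, -1 ≤ d i ∧ d i ≤ 1 := by
    intro i
    have h1 := Int.floor_eq_iff.mp (hx i)
    have h2 := abs_le.mp (hyd i)
    have hdi : d i = Int.floor (y i) - k i := rfl
    constructor
    · have : ((k i - 1 : ℤ) : ℝ) ≤ y i := by push_cast; linarith
      have := Int.le_floor.mpr this
      omega
    · have : y i < ((k i + 2 : ℤ) : ℝ) := by push_cast; linarith
      have := Int.floor_lt.mpr this
      omega
  refine Set.mem_biUnion (show d ∈ shifts n from ?_) (show y ∈ cell (k + d) from ?_)
  · rw [shifts, Fintype.mem_piFinset]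
    intro i
    have := hbound i
    simp only [Finset.mem_insert, Finset.mem_singleton]
    omega
  · intro i
    have hdi : d i = Int.floor (y i) - k i := rfl
    simp only [Pi.add_apply]
    omega

lemma main_estimate {n : ℕ} {p C''μ : ℝ} (hn : 0 < n) (hp : (n : ℝ) < p) :
    ∃ K : ℝ≥0∞, K ≠ ∞ ∧ ∀ S : Set (Fin n → ℝ), IsClosed S →
      ∀ μ : Measure (Fin n → ℝ), μ Sᶜ = 0 →
        (∀ x ∈ S, μ (Metric.closedBall x 1) ≤ ENNReal.ofReal C''μ) →
        ∀ F : (Fin n → ℝ) → ℝ, ContDiff ℝ 1 F →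
          (∫⁻ x, ENNReal.ofReal (|F x| ^ p) ∂μ)
            ≤ K * ((∫⁻ x, ENNReal.ofReal (|F x| ^ p)) +
                ∫⁻ x, ENNReal.ofReal (gradNorm F x ^ p)) := by
  have hp0 : 0 < p := lt_of_le_of_lt (Nat.cast_nonneg n) hp
  obtain ⟨K1, hK1top, hK1⟩ := morrey hn hp
  set M : ℝ≥0∞ := ENNReal.ofReal (max C''μ 0) with hM
  refine ⟨K1 * M * (shifts n).card, ?_, ?_⟩
  · exact ENNReal.mul_ne_top (ENNReal.mul_ne_top hK1top ENNReal.ofReal_ne_top)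
      (ENNReal.natCast_ne_top _)
  intro S hScl μ hμS hμb F hF
  have hFc : Continuous F := hF.continuous
  have hGrc : Continuous (gradNorm F) := gradNorm_continuous hF
  set f : (Fin n → ℝ) → ℝ≥0∞ := fun y => ENNReal.ofReal (|F y| ^ p) with hfdef
  set g : (Fin n → ℝ) → ℝ≥0∞ := fun y => ENNReal.ofReal (gradNorm F y ^ p) with hgdef
  have hfm : Measurable f :=
    (ENNReal.continuous_ofReal.comp (hFc.abs.rpow_const fun y => Or.inr hp0.le)).measurable
  have hgm : Measurable g :=
    (ENNReal.continuous_ofReal.comp (hGrc.rpow_const fun y => Or.inr hp0.le)).measurable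
  set H : (Fin n → ℤ) → ℝ≥0∞ := fun j => ∫⁻ z in cell j, (f z + g z) with hHdef
  set Itot : ℝ≥0∞ := (∫⁻ x, f x) + ∫⁻ x, g x with hItot
  -- reduce to S
  have step1 : (∫⁻ x, f x ∂μ) = ∫⁻ x in S, f x ∂μ := by
    have h := lintegral_add_compl f hScl.measurableSet (μ := μ)
    rw [setLIntegral_measure_zero _ _ hμS, add_zero] at h
    exact h.symm
  -- decompose into cells
  have step2 : (∫⁻ x in S, f x ∂μ) = ∑' k : Fin n → ℤ, ∫⁻ x in cell k ∩ S, f x ∂μ := by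
    have h0 : (∫⁻ x in S, f x ∂μ) = ∫⁻ x in ⋃ k : Fin n → ℤ, cell k, f x ∂(μ.restrict S) := by
      rw [cell_cover, setLIntegral_univ]
    rw [h0, lintegral_iUnion cell_measurable cell_disjoint]
    congr 1
    funext k
    rw [Measure.restrict_restrict (cell_measurable k)]
  -- per-cell bound
  have step3 : ∀ k : Fin n → ℤ, (∫⁻ x in cell k ∩ S, f x ∂μ)
      ≤ (K1 * M) * ∑ d ∈ shifts n, H (k + d) := by
    intro k
    rcases Set.eq_empty_or_nonempty (cell k ∩ S) with he | ⟨z, hzc, hzS⟩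
    · rw [he, Measure.restrict_empty, lintegral_zero_measure]
      exact zero_le
    · have hμk : μ (cell k ∩ S) ≤ M := by
        calc μ (cell k ∩ S) ≤ μ (Metric.closedBall z 1) := by
              apply measure_mono
              rintro w ⟨hwc, _⟩
              exact Metric.mem_closedBall.mpr (cell_diam hwc hzc)
          _ ≤ ENNReal.ofReal C''μ := hμb z hzS
          _ ≤ M := ENNReal.ofReal_le_ofReal (le_max_left _ _)
      have hpt : ∀ x ∈ cell k ∩ S, f x ≤ K1 * ∑ d ∈ shifts n, H (k + d) := by
        intro x hx
        refine (hK1 F hF x).trans (mul_le_mul_right ?_ _)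
        calc (∫⁻ y in Metric.closedBall x 1, (f y + g y))
            ≤ ∫⁻ y in ⋃ d ∈ shifts n, cell (k + d), (f y + g y) :=
              lintegral_mono_set (ball_subset_cells hx.1)
          _ ≤ ∑ d ∈ shifts n, H (k + d) := by
              apply le_of_eq
              apply lintegral_biUnion_finset ?_ (fun d _ => cell_measurable _)
              intro d _ d' _ hne
              exact cell_disjoint fun h => hne (by
                have := congrArg (fun e => e - k) h
                simpa using this)
      calc (∫⁻ x in cell k ∩ S, f x ∂μ)
          ≤ ∫⁻ _ in cell k ∩ S, (K1 * ∑ d ∈ shifts n, H (k + d)) ∂μ :=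
            setLIntegral_mono measurable_const hpt
        _ = (K1 * ∑ d ∈ shifts n, H (k + d)) * μ (cell k ∩ S) := setLIntegral_const _ _
        _ ≤ (K1 * ∑ d ∈ shifts n, H (k + d)) * M := mul_le_mul_right hμk _
        _ = (K1 * M) * ∑ d ∈ shifts n, H (k + d) := by ring
  -- sum the shifted integrals
  have step4 : ∑' k : Fin n → ℤ, ∑ d ∈ shifts n, H (k + d) = (shifts n).card * Itot := by
    rw [Summable.tsum_finsetSum fun d _ => ENNReal.summable]
    have hH : ∀ d : Fin n → ℤ, ∑' k : Fin n → ℤ, H (k + d) = Itot := by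
      intro d
      have he : ∑' k : Fin n → ℤ, H (k + d) = ∑' j : Fin n → ℤ, H j :=
        (Equiv.addRight d).tsum_eq H
      rw [he, hHdef, ← lintegral_iUnion cell_measurable cell_disjoint, cell_cover,
        setLIntegral_univ, lintegral_add_left hfm, hItot]
    rw [Finset.sum_congr rfl fun d _ => hH d, Finset.sum_const, nsmul_eq_mul]
  calc (∫⁻ x, f x ∂μ) = ∑' k : Fin n → ℤ, ∫⁻ x in cell k ∩ S, f x ∂μ := by
        rw [step1, step2]
    _ ≤ ∑' k : Fin n → ℤ, (K1 * M) * ∑ d ∈ shifts n, H (k + d) := ENNReal.tsum_le_tsum step3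
    _ = (K1 * M) * ((shifts n).card * Itot) := by rw [ENNReal.tsum_mul_left, step4]
    _ = K1 * M * (shifts n).card * Itot := by ring

theorem statement15 (n : ℕ) (p C''μ : ℝ) (hp : (n : ℝ) < p) :
    ∃ C : ℝ, 0 < C ∧
      ∀ S : Set (Fin n → ℝ), S.Nonempty → IsClosed S →
        ∀ μ : Measure (Fin n → ℝ), IsSuppOn μ S →
          (∀ x ∈ S, μ (Metric.closedBall x 1) ≤ ENNReal.ofReal C''μ) →
          ∀ F : (Fin n → ℝ) → ℝ, ContDiff ℝ 1 F →
            Integrable (fun x => |F x| ^ p) volume →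
            Integrable (fun x => gradNorm F x ^ p) volume →
            (∫⁻ x, ENNReal.ofReal (|F x| ^ p) ∂μ) ^ (1 / p)
              ≤ ENNReal.ofReal
                  (C * ((∫ x, |F x| ^ p) ^ (1 / p) +
                    (∫ x, gradNorm F x ^ p) ^ (1 / p))) := by
  have hp0 : 0 < p := lt_of_le_of_lt (Nat.cast_nonneg n) hp
  have hip0 : (0:ℝ) ≤ 1 / p := by positivity
  rcases Nat.eq_zero_or_pos n with h0 | hn
  · -- the zero-dimensional case
    subst h0
    haveI : Subsingleton (Fin 0 → ℝ) := ⟨fun a b => funext fun i => i.elim0⟩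
    refine ⟨(max C''μ 0) ^ (1/p) + 1, by positivity, ?_⟩
    intro S hSne hScl μ hsupp hμb F hF hIF hIG
    obtain ⟨x₀, hx₀⟩ := hSne
    have huniv : (univ : Set (Fin 0 → ℝ)) = Metric.closedBall x₀ 1 := by
      ext y
      simp [Subsingleton.elim y x₀]
    have hμu : μ univ ≤ ENNReal.ofReal (max C''μ 0) := by
      rw [huniv]
      exact (hμb x₀ hx₀).trans (ENNReal.ofReal_le_ofReal (le_max_left _ _))
    have hFconst : ∀ y, F y = F x₀ := fun y => congrArg F (Subsingleton.elim y x₀)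
    have hb : 0 ≤ (∫ x, gradNorm F x ^ p) ^ (1/p) :=
      Real.rpow_nonneg (integral_nonneg fun x => Real.rpow_nonneg (gradNorm_nonneg F x) p) _
    have ha : (∫ x, |F x| ^ p) ^ (1/p) = |F x₀| := by
      have h1 : (fun x : Fin 0 → ℝ => |F x| ^ p) = fun _ => |F x₀| ^ p :=
        funext fun y => by rw [hFconst y]
      rw [h1, integral_const]
      have h2 : volume.real (univ : Set (Fin 0 → ℝ)) = 1 := by
        rw [measureReal_def, volume_pi, Measure.pi_univ]
        simp
      rw [h2, one_smul, ← Real.rpow_mul (abs_nonneg _), mul_one_div_cancel hp0.ne',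
        Real.rpow_one]
    rw [ha]
    -- compute the left-hand side
    have hLf : (fun x : Fin 0 → ℝ => ENNReal.ofReal (|F x| ^ p))
        = fun _ => ENNReal.ofReal (|F x₀| ^ p) := funext fun y => by rw [hFconst y]
    have hLHS : (∫⁻ x, ENNReal.ofReal (|F x| ^ p) ∂μ) ^ (1/p)
        ≤ ENNReal.ofReal |F x₀| * ENNReal.ofReal ((max C''μ 0) ^ (1/p)) := by
      rw [hLf, lintegral_const, ENNReal.mul_rpow_of_nonneg _ _ hip0]
      apply mul_le_mul'
      · rw [ENNReal.ofReal_rpow_of_nonneg (Real.rpow_nonneg (abs_nonneg _) p) hip0,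
          ← Real.rpow_mul (abs_nonneg _), mul_one_div_cancel hp0.ne', Real.rpow_one]
      · rw [← ENNReal.ofReal_rpow_of_nonneg (le_max_right C''μ 0) hip0]
        exact ENNReal.rpow_le_rpow hμu hip0
    refine hLHS.trans ?_
    rw [← ENNReal.ofReal_mul (abs_nonneg _)]
    apply ENNReal.ofReal_le_ofReal
    set m := (max C''μ 0) ^ (1/p) with hm
    have hm0 : 0 ≤ m := Real.rpow_nonneg (le_max_right _ _) _
    nlinarith [abs_nonneg (F x₀), hb]
  · obtain ⟨K, hKtop, hK⟩ := main_estimate hn hp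
    refine ⟨(2 * K).toReal ^ (1/p) + 1, by positivity, ?_⟩
    intro S hSne hScl μ hsupp hμb F hF hIF hIG
    have key := hK S hScl μ hsupp.1 hμb F hF
    set If : ℝ≥0∞ := ∫⁻ x, ENNReal.ofReal (|F x| ^ p) with hIfdef
    set Ig : ℝ≥0∞ := ∫⁻ x, ENNReal.ofReal (gradNorm F x ^ p) with hIgdef
    have h2K : (2 * K) ≠ ∞ := ENNReal.mul_ne_top (by norm_num) hKtop
    have ha0 : 0 ≤ ∫ x, |F x| ^ p :=
      integral_nonneg fun x => Real.rpow_nonneg (abs_nonneg _) _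
    have hb0 : 0 ≤ ∫ x, gradNorm F x ^ p :=
      integral_nonneg fun x => Real.rpow_nonneg (gradNorm_nonneg F x) _
    have hIfr : If = ENNReal.ofReal (∫ x, |F x| ^ p) :=
      (ofReal_integral_eq_lintegral_ofReal hIF
        (ae_of_all _ fun x => Real.rpow_nonneg (abs_nonneg _) _)).symm
    have hIgr : Ig = ENNReal.ofReal (∫ x, gradNorm F x ^ p) :=
      (ofReal_integral_eq_lintegral_ofReal hIG
        (ae_of_all _ fun x => Real.rpow_nonneg (gradNorm_nonneg F x) _)).symm
    calc (∫⁻ x, ENNReal.ofReal (|F x| ^ p) ∂μ) ^ (1/p)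
        ≤ (K * (If + Ig)) ^ (1/p) := ENNReal.rpow_le_rpow key hip0
      _ = K ^ (1/p) * (If + Ig) ^ (1/p) := ENNReal.mul_rpow_of_nonneg _ _ hip0
      _ ≤ K ^ (1/p) * (2 ^ (1/p) * (If ^ (1/p) + Ig ^ (1/p))) :=
          mul_le_mul_right (two_rpow_helper hip0 _ _) _
      _ = (2 * K) ^ (1/p) * (If ^ (1/p) + Ig ^ (1/p)) := by
          rw [ENNReal.mul_rpow_of_nonneg _ _ hip0]; ring
      _ ≤ ENNReal.ofReal ((2*K).toReal ^ (1/p) + 1) * (If ^ (1/p) + Ig ^ (1/p)) := by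
          apply mul_le_mul_left
          conv_lhs => rw [← ENNReal.ofReal_toReal h2K]
          rw [ENNReal.ofReal_rpow_of_nonneg ENNReal.toReal_nonneg hip0]
          exact ENNReal.ofReal_le_ofReal (le_add_of_nonneg_right zero_le_one)
      _ = ENNReal.ofReal (((2*K).toReal ^ (1/p) + 1) *
            ((∫ x, |F x| ^ p) ^ (1/p) + (∫ x, gradNorm F x ^ p) ^ (1/p))) := by
          rw [hIfr, hIgr, ENNReal.ofReal_rpow_of_nonneg ha0 hip0,
            ENNReal.ofReal_rpow_of_nonneg hb0 hip0,
            ← ENNReal.ofReal_add (Real.rpow_nonneg ha0 _) (Real.rpow_nonneg hb0 _),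
            ← ENNReal.ofReal_mul (by positivity)]
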